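/- Let s, k be positive integers with 1 ≤ s < p for a prime p, and let 0 ≤ R < p^k with R > 0 if s = 1. Then the multinomial coefficient (s·p^k + R)! / ((p^k!)^s · R!) is not divisible by p. -/

import Mathlib

open Nat Finset

private lemma aux_dvd (a R : ℕ) : ∀ s : ℕ, a.factorial ^ s * R.factorial ∣ (s * a + R).factorial
  | 0 => by simp
  | s + 1 => by
    have h1 := aux_dvd a R s
    have h2 : a.factorial * (s * a + R).factorial ∣ (a + (s * a + R)).factorial :=
      Nat.factorial_mul_factorial_dvd_factorial_add _ _
    have : (s + 1) * a + R = a + (s * a + R) := by ring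
    rw [this, pow_succ, mul_comm (a.factorial ^ s) a.factorial, mul_assoc]
    exact dvd_trans (mul_dvd_mul_left _ h1) h2

private lemma aux_term (p s k R : ℕ) (hp : p.Prime) (hsp : s < p) (hR : R < p ^ k) (i : ℕ) :
    (s * p ^ k + R) / p ^ i = s * (p ^ k / p ^ i) + R / p ^ i := by
  rcases le_or_gt i k with h | h
  · have hpk : p ^ k = p ^ (k - i) * p ^ i := by
      rw [← pow_add, Nat.sub_add_cancel h]
    have hpi : 0 < p ^ i := pow_pos hp.pos i
    rw [hpk, ← mul_assoc, add_comm (s * p ^ (k - i) * p ^ i) R,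
      Nat.add_mul_div_right _ _ hpi, Nat.mul_div_cancel _ hpi, add_comm]
  · have hlt : s * p ^ k + R < p ^ i := by
      calc s * p ^ k + R < s * p ^ k + p ^ k := by omega
        _ = (s + 1) * p ^ k := by ring
        _ ≤ p * p ^ k := Nat.mul_le_mul_right _ (by omega)
        _ = p ^ (k + 1) := by ring
        _ ≤ p ^ i := Nat.pow_le_pow_right hp.pos h
    rw [Nat.div_eq_of_lt hlt, Nat.div_eq_of_lt (lt_of_lt_of_le hR (by
      exact (Nat.pow_le_pow_right hp.pos h.le).trans' (Nat.pow_le_pow_right hp.pos (by omega)))),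
      Nat.div_eq_of_lt (lt_of_lt_of_le (Nat.pow_lt_pow_right hp.one_lt h) le_rfl), mul_zero,
      add_zero]

/-- For a prime `p`, positive integers `s < p` and `k`, and `0 ≤ R < p^k`
(with `R > 0` if `s = 1`), the multinomial coefficient
`(s·p^k + R)! / ((p^k!)^s · R!)` is not divisible by `p`. -/
theorem stmt_5 (p s k R : ℕ) (hp : p.Prime) (hk : 0 < k) (hs : 1 ≤ s)
    (hsp : s < p) (hR : R < p ^ k) (hR1 : s = 1 → 0 < R) :
    ¬ p ∣ (s * p ^ k + R).factorial / ((p ^ k).factorial ^ s * R.factorial) := by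
  haveI : Fact p.Prime := ⟨hp⟩
  set N := (s * p ^ k + R).factorial with hN
  set D := (p ^ k).factorial ^ s * R.factorial with hD
  have hdvd : D ∣ N := aux_dvd (p ^ k) R s
  have hDpos : 0 < D := Nat.mul_pos (pow_pos (Nat.factorial_pos _) _) (Nat.factorial_pos _)
  have hNpos : 0 < N := Nat.factorial_pos _
  have hq : 0 < N / D := Nat.div_pos (Nat.le_of_dvd hNpos hdvd) hDpos
  intro hdiv
  have h1 : 1 ≤ padicValNat p (N / D) := one_le_padicValNat_of_dvd hq.ne' hdiv
  -- compute valuations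
  have hb1 : Nat.log p (s * p ^ k + R) < k + 1 := by
    refine Nat.log_lt_of_lt_pow (Nat.add_pos_left (Nat.mul_pos hs (pow_pos hp.pos k)) R).ne' ?_
    calc s * p ^ k + R < s * p ^ k + p ^ k := by omega
      _ = (s + 1) * p ^ k := by ring
      _ ≤ p * p ^ k := Nat.mul_le_mul_right _ (by omega)
      _ = p ^ (k + 1) := by ring
  have hb2 : Nat.log p (p ^ k) < k + 1 := by
    exact Nat.log_lt_of_lt_pow (pow_pos hp.pos k).ne' <| Nat.pow_lt_pow_right hp.one_lt (by omega)
  have hb3 : Nat.log p R < k + 1 := by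
    rcases Nat.eq_zero_or_pos R with h0 | h0
    · simp [h0]
    · exact Nat.log_lt_of_lt_pow h0.ne' <| lt_trans hR (Nat.pow_lt_pow_right hp.one_lt (by omega))
  have hvN : padicValNat p N = ∑ i ∈ Finset.Ico 1 (k + 1), (s * p ^ k + R) / p ^ i :=
    padicValNat_factorial hb1
  have hvD : padicValNat p D = padicValNat p N := by
    rw [hD, padicValNat.mul (by positivity) (Nat.factorial_ne_zero R),
      padicValNat.pow _ _,
      padicValNat_factorial hb2, padicValNat_factorial hb3, hvN, Finset.mul_sum,
      ← Finset.sum_add_distrib]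
    exact Finset.sum_congr rfl fun i _ => (aux_term p s k R hp hsp hR i).symm
  have : padicValNat p (N / D) = 0 := by
    rw [padicValNat.div_of_dvd hdvd, hvD, Nat.sub_self]
  omega
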